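/- Let u and v be words (possibly empty) with con(u) = con(v). Then u and v are of the same type if and only if for every three pairwise distinct variables x, y, z (not required to occur in u), the words u(x,y,z) and v(x,y,z) are of the same type. -/

import Mathlib

/-- The alphabet of variables. -/
abbrev Var := ℕ

/-- Words are (possibly empty) lists of variables; elements of the free
semigroup `𝔄⁺` are the nonempty ones. -/
abbrev Word := List Var

/-- Two words are of the same type if they agree after collapsing each
maximal constant run (island) to a single letter. -/
def sameType (u v : Word) : Prop :=
  u.destutter (· ≠ ·) = v.destutter (· ≠ ·)

/-- The number of islands of a word. -/
def height (u : Word) : ℕ := (u.destutter (· ≠ ·)).length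

/-- The set of variables occurring in a word. -/
def con (u : Word) : Set Var := {x | x ∈ u}

/-- `del u X` is the word obtained from `u` by deleting all occurrences of all
variables not in the list `X`; i.e. `u(x₁,…,x_k)` for `X = [x₁,…,x_k]`. -/
def del (u : Word) (X : List Var) : Word := u.filter (· ∈ X)

/-- The set of linear variables of `u` (occurring exactly once). -/
def lin (u : Word) : Set Var := {x | u.count x = 1}

/-- The set of non-linear variables of `u` (occurring at least twice). -/
def nonlin (u : Word) : Set Var := {x | 2 ≤ u.count x}

/-- The set of variables occurring exactly twice in `u`. -/
def con2 (u : Word) : Set Var := {x | u.count x = 2}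

/-- The set of variables occurring at least three times in `u`. -/
def conGt2 (u : Word) : Set Var := {x | 3 ≤ u.count x}

/-- Applying a substitution `Θ : 𝔄 → 𝔄⁺` to a word, as the extension of `Θ`
to a homomorphism. -/
def subst (Θ : Var → Word) (u : Word) : Word := u.flatMap Θ

/-- `w` is a power (with positive exponent) of the variable `c`. -/
def isPowerOf (w : Word) (c : Var) : Prop := ∃ k : ℕ, 0 < k ∧ w = List.replicate k c

/-- A monoid `M` satisfies the identity `u ≈ v` if every monoid homomorphism
from the free monoid `𝔄*` to `M` (equivalently, the extension of every map
`φ : 𝔄 → M`) identifies `u` and `v`. -/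
def MSat (M : Type) [Monoid M] (u v : Word) : Prop :=
  ∀ φ : Var → M, (u.map φ).prod = (v.map φ).prod

/-- Evaluation of a nonempty word in a semigroup under `φ : 𝔄 → S`
(the empty word evaluates to `none`). -/
def evalS {S : Type} [Semigroup S] (φ : Var → S) : Word → Option S
  | [] => none
  | a :: t => some ((t.map φ).foldl (· * ·) (φ a))

/-- A semigroup `S` satisfies the identity `u ≈ v` between nonempty words if
every semigroup homomorphism from the free semigroup `𝔄⁺` to `S` identifies
`u` and `v`. -/
def SSat (S : Type) [Semigroup S] (u v : Word) : Prop :=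
  ∀ φ : Var → S, evalS φ u = evalS φ v

/-- Property (C_ℓ) for a monoid: every word in two variables of height at most
`ℓ` can form an identity of `M` only with a word of the same type. -/
def MPropC (M : Type) [Monoid M] (ℓ : ℕ) : Prop :=
  ∀ x y : Var, x ≠ y → ∀ u : Word, u ≠ [] → (∀ c ∈ u, c = x ∨ c = y) →
    height u ≤ ℓ → ∀ v : Word, MSat M u v → sameType u v

/-- Property (C_ℓ) for a semigroup. -/
def SPropC (S : Type) [Semigroup S] (ℓ : ℕ) : Prop :=
  ∀ x y : Var, x ≠ y → ∀ u : Word, u ≠ [] → (∀ c ∈ u, c = x ∨ c = y) →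
    height u ≤ ℓ → ∀ v : Word, SSat S u v → sameType u v

/-- A monoid is finitely based if some finite set of identities it satisfies
entails all its identities (in every monoid). -/
def MonoidFB (M : Type) [Monoid M] : Prop :=
  ∃ Sig : Finset (Word × Word),
    (∀ p ∈ Sig, MSat M p.1 p.2) ∧
    ∀ (N : Type) [Monoid N], (∀ p ∈ Sig, MSat N p.1 p.2) →
      ∀ u v : Word, MSat M u v → MSat N u v

/-- A semigroup is finitely based if some finite set of identities (between
nonempty words) it satisfies entails all its identities (in every semigroup). -/
def SemigroupFB (S : Type) [Semigroup S] : Prop :=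
  ∃ Sig : Finset (Word × Word),
    (∀ p ∈ Sig, p.1 ≠ [] ∧ p.2 ≠ [] ∧ SSat S p.1 p.2) ∧
    ∀ (T : Type) [Semigroup T], (∀ p ∈ Sig, SSat T p.1 p.2) →
      ∀ u v : Word, u ≠ [] → v ≠ [] → SSat S u v → SSat T u v

/-- `B` is a block of `u` occurring as `u = p ++ B ++ s`: it contains no linear
variables of `u` and is maximal with this property. -/
def IsBlockAt (u p B s : Word) : Prop :=
  u = p ++ B ++ s ∧ (∀ c ∈ B, c ∉ lin u) ∧
  (∀ c : Var, p.getLast? = some c → c ∈ lin u) ∧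
  (∀ c : Var, s.head? = some c → c ∈ lin u)

/-- The word `Uₙ = (x₁⋯xₙ)(xₙ⋯x₁)(x₁⋯xₙ)`. -/
def Uword (n : ℕ) (x : Fin n → Var) : Word :=
  List.ofFn x ++ (List.ofFn x).reverse ++ List.ofFn x

/-- The word `Vₙ = (x₁⋯xₙ)(x₁²x₂²⋯xₙ²)`. -/
def Vword (n : ℕ) (x : Fin n → Var) : Word :=
  List.ofFn x ++ (List.ofFn x).flatMap (fun c => [c, c])

namespace Stmt5Aux
open List

lemma destutter'_head_ex (l : Word) (a : Var) :
    ∃ t, l.destutter' (· ≠ ·) a = a :: t := by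
  induction l generalizing a with
  | nil => exact ⟨[], rfl⟩
  | cons b l ih =>
    rw [destutter'_cons]
    split_ifs with h
    · exact ⟨_, rfl⟩
    · exact ih a

lemma head?_destutter (l : Word) : (l.destutter (· ≠ ·)).head? = l.head? := by
  cases l with
  | nil => rfl
  | cons a l =>
    obtain ⟨t, ht⟩ := destutter'_head_ex l a
    rw [destutter_cons', ht]
    rfl

lemma destutter_cons_eq (a : Var) (s : Word) :
    (a :: s).destutter (· ≠ ·) =
      if s.head? = some a then s.destutter (· ≠ ·) else a :: s.destutter (· ≠ ·) := by
  cases s with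
  | nil => simp
  | cons b t =>
    by_cases hab : a = b
    · subst hab
      simp [destutter_cons_cons, destutter_cons']
    · have hba : ¬ b = a := fun h => hab h.symm
      simp [destutter_cons_cons, hab, hba, destutter_cons']

lemma filter_destutter_congr_cons (P : Var → Bool) (a : Var) (w w' : Word)
    (h : (w.filter P).destutter (· ≠ ·) = (w'.filter P).destutter (· ≠ ·)) :
    ((a :: w).filter P).destutter (· ≠ ·) = ((a :: w').filter P).destutter (· ≠ ·) := by
  rw [filter_cons, filter_cons]
  cases hP : P a
  · simpa [hP] using h
  · simp only [hP, if_true]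
    rw [destutter_cons_eq, destutter_cons_eq,
      ← head?_destutter (w.filter P), ← head?_destutter (w'.filter P), h]

lemma filter_destutter_cons_cons (P : Var → Bool) (a : Var) (t : Word) :
    ((a :: a :: t).filter P).destutter (· ≠ ·) = ((a :: t).filter P).destutter (· ≠ ·) := by
  rw [filter_cons, filter_cons]
  cases hP : P a
  · simp [hP]
  · simp only [hP, if_true]
    rw [destutter_cons', destutter'_cons, if_neg (by simp), destutter_cons']

lemma filter_destutter'_eq (P : Var → Bool) :
    ∀ (l : Word) (a : Var),
      ((l.destutter' (· ≠ ·) a).filter P).destutter (· ≠ ·) =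
        ((a :: l).filter P).destutter (· ≠ ·) := by
  intro l
  induction l with
  | nil => intro a; rfl
  | cons b t ih =>
    intro a
    rw [destutter'_cons]
    split_ifs with h
    · exact filter_destutter_congr_cons P a _ _ (ih b)
    · push_neg at h
      subst h
      rw [ih a, filter_destutter_cons_cons]

lemma filter_destutter (P : Var → Bool) (u : Word) :
    ((u.destutter (· ≠ ·)).filter P).destutter (· ≠ ·) = (u.filter P).destutter (· ≠ ·) := by
  cases u with
  | nil => rfl
  | cons a l => rw [destutter_cons']; exact filter_destutter'_eq P l a

lemma destutter'_append (c : Var) (r : Word) :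
    ∀ (l : Word) (a : Var), (∀ z ∈ (a :: l).getLast?, z ≠ c) →
      (l ++ c :: r).destutter' (· ≠ ·) a =
        l.destutter' (· ≠ ·) a ++ (c :: r).destutter (· ≠ ·) := by
  intro l
  induction l with
  | nil =>
    intro a h
    have hac : a ≠ c := h a (by simp)
    rw [nil_append, destutter'_nil, destutter_cons', destutter'_cons, if_pos hac, cons_append,
      nil_append]
  | cons b t ih =>
    intro a h
    have h' : ∀ z ∈ (b :: t).getLast?, z ≠ c := by rwa [getLast?_cons_cons] at h
    rw [cons_append, destutter'_cons, destutter'_cons (l := t)]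
    split_ifs with hab
    · rw [ih b h', cons_append]
    · push_neg at hab
      subst hab
      exact ih a h'

lemma destutter_append (q : Word) (c : Var) (r : Word) (hq : q ≠ [])
    (h : ∀ z ∈ q.getLast?, z ≠ c) :
    (q ++ c :: r).destutter (· ≠ ·) = q.destutter (· ≠ ·) ++ (c :: r).destutter (· ≠ ·) := by
  cases q with
  | nil => exact absurd rfl hq
  | cons a l => rw [cons_append, destutter_cons', destutter_cons',
      destutter'_append c r l a h]

lemma getLast?_filter (P : Var → Bool) (p : Word) (z : Var)
    (hz : p.getLast? = some z) (hPz : P z = true) :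
    (p.filter P).getLast? = some z := by
  rw [← head?_reverse] at hz ⊢
  rw [← filter_reverse]
  cases hr : p.reverse with
  | nil => rw [hr] at hz; simp at hz
  | cons w t =>
    rw [hr] at hz
    simp only [head?_cons, Option.some.injEq] at hz
    subst hz
    rw [filter_cons, if_pos hPz, head?_cons]

lemma lcp_cases : ∀ (u v : Word), u ≠ v →
    (∃ t, t ≠ [] ∧ v = u ++ t) ∨ (∃ t, t ≠ [] ∧ u = v ++ t) ∨
      (∃ p a b s t, a ≠ b ∧ u = p ++ a :: s ∧ v = p ++ b :: t) := by
  intro u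
  induction u with
  | nil =>
    intro v hv
    exact Or.inl ⟨v, Ne.symm hv, rfl⟩
  | cons a u ih =>
    intro v hv
    cases v with
    | nil => exact Or.inr (Or.inl ⟨a :: u, by simp, rfl⟩)
    | cons b v =>
      by_cases hab : a = b
      · subst hab
        have huv : u ≠ v := fun h => hv (by rw [h])
        rcases ih v huv with ⟨t, ht, rfl⟩ | ⟨t, ht, rfl⟩ | ⟨p, c, d, s, t, hcd, rfl, rfl⟩
        · exact Or.inl ⟨t, ht, rfl⟩
        · exact Or.inr (Or.inl ⟨t, ht, rfl⟩)
        · exact Or.inr (Or.inr ⟨a :: p, c, d, s, t, hcd, rfl, rfl⟩)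
      · exact Or.inr (Or.inr ⟨[], a, b, u, v, hab, rfl, rfl⟩)

end Stmt5Aux

namespace Stmt5Aux
open List

lemma exists_getLast? {l : Word} (h : l ≠ []) : ∃ z, l.getLast? = some z := by
  cases hL : l.getLast? with
  | none => exact absurd (List.getLast?_eq_none_iff.mp hL) h
  | some z => exact ⟨z, rfl⟩

lemma head_ne (P : Var → Bool) (s t : Word) (a b : Var) (hab : a ≠ b)
    (hPa : P a = true) (hPb : P b = true) :
    ((a :: s).filter P).destutter (· ≠ ·) ≠ ((b :: t).filter P).destutter (· ≠ ·) := by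
  intro hEq
  have h2 := congrArg List.head? hEq
  rw [head?_destutter, head?_destutter, filter_cons, if_pos hPa, filter_cons, if_pos hPb] at h2
  simp only [head?_cons, Option.some.injEq] at h2
  exact hab h2

lemma prefix_ne (P : Var → Bool) (u t' : Word) (a z : Var)
    (hz : u.getLast? = some z) (hza : z ≠ a) (hPa : P a = true) (hPz : P z = true) :
    (u.filter P).destutter (· ≠ ·) ≠ ((u ++ a :: t').filter P).destutter (· ≠ ·) := by
  intro hEq
  rw [filter_append, filter_cons, if_pos hPa] at hEq
  have hlast := getLast?_filter P u z hz hPz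
  have hne : u.filter P ≠ [] := by
    intro h0; rw [h0] at hlast; simp at hlast
  have hgl : ∀ w ∈ (u.filter P).getLast?, w ≠ a := by
    rw [hlast]; intro w hw
    simp only [Option.mem_def, Option.some.injEq] at hw
    subst hw; exact hza
  rw [destutter_append _ a _ hne hgl] at hEq
  have hlen := congrArg List.length hEq
  rw [length_append] at hlen
  have hpos : 0 < ((a :: t'.filter P).destutter (· ≠ ·)).length := by
    rw [destutter_cons']
    exact length_pos_iff.mpr (destutter'_ne_nil (t'.filter P) (· ≠ ·))
  omega

lemma mismatch_ne (P : Var → Bool) (p s t : Word) (a b z : Var)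
    (hz : p.getLast? = some z) (hPz : P z = true) (hza : z ≠ a) (hzb : z ≠ b)
    (hPa : P a = true) (hPb : P b = true) (hab : a ≠ b) :
    ((p ++ a :: s).filter P).destutter (· ≠ ·) ≠
      ((p ++ b :: t).filter P).destutter (· ≠ ·) := by
  intro hEq
  rw [filter_append, filter_append, filter_cons, filter_cons, if_pos hPa, if_pos hPb] at hEq
  have hlast := getLast?_filter P p z hz hPz
  have hne : p.filter P ≠ [] := by
    intro h0; rw [h0] at hlast; simp at hlast
  have hgl : ∀ (c : Var), (∀ w ∈ (p.filter P).getLast?, w ≠ c) ∨ ¬ z ≠ c := by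
    intro c
    by_cases hzc : z ≠ c
    · left; rw [hlast]; intro w hw
      simp only [Option.mem_def, Option.some.injEq] at hw
      subst hw; exact hzc
    · right; exact hzc
  have hgla : ∀ w ∈ (p.filter P).getLast?, w ≠ a := by
    rcases hgl a with h | h
    · exact h
    · exact absurd hza h
  have hglb : ∀ w ∈ (p.filter P).getLast?, w ≠ b := by
    rcases hgl b with h | h
    · exact h
    · exact absurd hzb h
  rw [destutter_append _ a _ hne hgla, destutter_append _ b _ hne hglb] at hEq
  have h3 := append_cancel_left hEq
  have h4 := congrArg List.head? h3
  rw [head?_destutter, head?_destutter] at h4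
  simp only [head?_cons, Option.some.injEq] at h4
  exact hab h4

end Stmt5Aux

namespace Stmt5Aux
open List

lemma main (u v : Word) (hu : u.Chain' (· ≠ ·)) (hv : v.Chain' (· ≠ ·))
    (hne : u ≠ v) (hnil : u = [] ↔ v = []) :
    ∃ x y z : Var, x ≠ y ∧ y ≠ z ∧ x ≠ z ∧
      (u.filter (· ∈ [x, y, z])).destutter (· ≠ ·) ≠
        (v.filter (· ∈ [x, y, z])).destutter (· ≠ ·) := by
  rcases lcp_cases u v hne with ⟨t, ht, rfl⟩ | ⟨t, ht, rfl⟩ | ⟨p, a, b, s, t, hab, rfl, rfl⟩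
  · have hu0 : u ≠ [] := by
      intro h; subst h; exact ht (by simpa using hnil.mp rfl)
    obtain ⟨a, t', rfl⟩ := exists_cons_of_ne_nil ht
    obtain ⟨z, hz⟩ := exists_getLast? hu0
    have hza : z ≠ a := (isChain_append.mp hv).2.2 z hz a rfl
    refine ⟨a, z, a + z + 1, Ne.symm hza, Nat.ne_of_lt (by omega), Nat.ne_of_lt (by omega), ?_⟩
    exact prefix_ne _ u t' a z hz hza (by simp) (by simp)
  · have hv0 : v ≠ [] := by
      intro h; subst h; exact ht (by simpa using hnil.mpr rfl)
    obtain ⟨a, t', rfl⟩ := exists_cons_of_ne_nil ht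
    obtain ⟨z, hz⟩ := exists_getLast? hv0
    have hza : z ≠ a := (isChain_append.mp hu).2.2 z hz a rfl
    refine ⟨a, z, a + z + 1, Ne.symm hza, Nat.ne_of_lt (by omega), Nat.ne_of_lt (by omega), ?_⟩
    exact Ne.symm (prefix_ne (fun c => decide (c ∈ [a, z, a + z + 1])) v t' a z hz hza
      (by simp) (by simp))
  · by_cases hp : p = []
    · subst hp
      refine ⟨a, b, a + b + 1, hab, Nat.ne_of_lt (by omega), Nat.ne_of_lt (by omega), ?_⟩
      simpa using head_ne (fun c => decide (c ∈ [a, b, a + b + 1])) s t a b hab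
        (by simp) (by simp)
    · obtain ⟨z, hz⟩ := exists_getLast? hp
      have hza : z ≠ a := (isChain_append.mp hu).2.2 z hz a rfl
      have hzb : z ≠ b := (isChain_append.mp hv).2.2 z hz b rfl
      refine ⟨a, b, z, hab, Ne.symm hzb, Ne.symm hza, ?_⟩
      exact mismatch_ne _ p s t a b z hz (by simp) hza hzb (by simp) (by simp) hab

end Stmt5Aux


/-- Two words with the same content are of the same type iff all
their three-variable deletions are of the same type. -/
theorem stmt5 (u v : Word) (hcon : con u = con v) :
    sameType u v ↔
      ∀ x y z : Var, x ≠ y → y ≠ z → x ≠ z →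
        sameType (del u [x, y, z]) (del v [x, y, z]) := by
  constructor
  · intro h x y z _ _ _
    unfold sameType at h ⊢
    unfold del
    rw [← Stmt5Aux.filter_destutter _ u, ← Stmt5Aux.filter_destutter _ v, h]
  · intro h
    unfold sameType
    by_contra hne0
    have h0 : u = [] ↔ v = [] := by
      constructor <;> intro hh <;> subst hh <;> rw [List.eq_nil_iff_forall_not_mem] <;>
        intro x hx
      · have hxc : x ∈ con v := hx
        rw [← hcon] at hxc
        simp [con] at hxc
      · have hxc : x ∈ con u := hx
        rw [hcon] at hxc
        simp [con] at hxc
    have hnil : u.destutter (· ≠ ·) = [] ↔ v.destutter (· ≠ ·) = [] := by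
      simp only [List.destutter_eq_nil]; exact h0
    obtain ⟨x, y, z, hxy, hyz, hxz, hd⟩ :=
      Stmt5Aux.main (u.destutter (· ≠ ·)) (v.destutter (· ≠ ·))
        (u.isChain_destutter (· ≠ ·)) (v.isChain_destutter (· ≠ ·)) hne0 hnil
    apply hd
    rw [Stmt5Aux.filter_destutter, Stmt5Aux.filter_destutter]
    exact h x y z hxy hyz hxz
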